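/- Let k be a field and A a finite set of points of k^n, and let I(A) be its vanishing ideal. Then the residue classes of the monomials X^γ, as γ runs through D(A), form a basis of the k-vector space k[X_1,…,X_n]/I(A). -/

import Mathlib

/-- `D ∈ 𝒟ₙ`: a finite set `D ⊆ ℕ₀ⁿ` (given as a `Finset`) such that whenever `d ∈ D`
and `dᵢ ≠ 0`, then `d − eᵢ ∈ D`. -/
def IsDset {n : ℕ} (D : Finset (Fin n → ℕ)) : Prop :=
  ∀ d ∈ D, ∀ i : Fin n, d i ≠ 0 → d - Pi.single i 1 ∈ D

variable {k : Type*} [Field k] [DecidableEq k]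

/-- The set `D(A) ⊆ ℕ₀ⁿ` attached to a finite set of points `A ⊆ kⁿ`, defined by
induction on `n`.  For `n = 0`, `D(A)` is empty if `A` is and the single point of `ℕ₀⁰`
otherwise (so that for `n = 1` one gets `D(A) = {0, 1, …, #A − 1}`).  For `n + 1`:
writing `p(A)` for the set of first coordinates of `A` and
`H a₁ = p⁻¹(a₁) ∩ A ⊆ kⁿ` (via the projection `Fin.tail` forgetting the first
coordinate), `D(A) = Σ_{a₁ ∈ p(A)} D(H a₁)`, the sum with respect to the addition `+`
on `𝒟`; spelled out via the closed formula for such sums, `d ∈ D(A)` iff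
`Fin.tail d ∈ ⋃_{a₁ ∈ p(A)} D(H a₁)` and `d 0 < #{a₁ ∈ p(A) : Fin.tail d ∈ D(H a₁)}`. -/
def DofA : (n : ℕ) → Finset (Fin n → k) → Finset (Fin n → ℕ)
  | 0, A => A.image (fun _ => (fun _ => 0))
  | (n + 1), A =>
      ((A.image (fun a => a 0)).biUnion
          (fun a1 => DofA n ((A.filter (fun a => a 0 = a1)).image (fun a => Fin.tail a)))).biUnion
        (fun dh =>
          (Finset.range
              (((A.image (fun a => a 0)).filter
                  (fun a1 =>
                    dh ∈ DofA n ((A.filter (fun a => a 0 = a1)).image (fun a => Fin.tail a)))).card)).image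
            (fun j => Fin.cons j dh))


/-- The vanishing ideal `I(A)` of a finite set of points `A ⊆ kⁿ`: all polynomials in
`k[X₁,…,Xₙ]` vanishing at every point of `A`. -/
def vanIdeal (n : ℕ) (A : Finset (Fin n → k)) : Ideal (MvPolynomial (Fin n) k) where
  carrier := {f | ∀ a ∈ A, MvPolynomial.eval a f = 0}
  add_mem' := by
    intro f g hf hg a ha
    simp [map_add, hf a ha, hg a ha]
  zero_mem' := by
    intro a ha
    simp
  smul_mem' := by
    intro c f hf a ha
    simp [smul_eq_mul, map_mul, hf a ha]

set_option linter.unusedSectionVars false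
namespace Stmt16Aux

/-- Lex-type strict order on `Fin n → ℕ`, last coordinate most significant. -/
def mLt : {n : ℕ} → (Fin n → ℕ) → (Fin n → ℕ) → Prop
  | 0, _, _ => False
  | _ + 1, x, y => mLt (Fin.tail x) (Fin.tail y) ∨ (Fin.tail x = Fin.tail y ∧ x 0 < y 0)

def mLe {n : ℕ} (x y : Fin n → ℕ) : Prop := mLt x y ∨ x = y

lemma mLt_wf : ∀ n, WellFounded (@mLt n)
  | 0 => ⟨fun x => ⟨x, fun _ h => h.elim⟩⟩
  | n + 1 => by
      have h : WellFounded (InvImage (Prod.Lex (@mLt n) ((· < ·) : ℕ → ℕ → Prop))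
          (fun x : Fin (n+1) → ℕ => (Fin.tail x, x 0))) :=
        InvImage.wf _ ((mLt_wf n).prod_lex wellFounded_lt)
      refine Subrelation.wf (fun {x y} hxy => ?_) h
      rcases hxy with h1 | ⟨h1, h2⟩
      · exact Prod.Lex.left _ _ h1
      · exact (Prod.lex_def).2 (Or.inr ⟨h1, h2⟩)

lemma mLt_irrefl : ∀ {n} (x : Fin n → ℕ), ¬ mLt x x
  | 0, _ => id
  | n+1, x => by rintro (h | ⟨_, h⟩); exacts [mLt_irrefl _ h, lt_irrefl _ h]

lemma mLt_trans : ∀ {n} {x y z : Fin n → ℕ}, mLt x y → mLt y z → mLt x z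
  | 0, _, _, _, h, _ => h.elim
  | n+1, x, y, z, h1, h2 => by
      rcases h1 with h1 | ⟨e1, l1⟩ <;> rcases h2 with h2 | ⟨e2, l2⟩
      · exact Or.inl (mLt_trans h1 h2)
      · exact Or.inl (by rw [← e2]; exact h1)
      · exact Or.inl (by rw [e1]; exact h2)
      · exact Or.inr ⟨e1.trans e2, l1.trans l2⟩

lemma mLt_trichotomy : ∀ {n} (x y : Fin n → ℕ), mLt x y ∨ x = y ∨ mLt y x
  | 0, x, y => Or.inr (Or.inl (funext fun i => i.elim0))
  | n+1, x, y => by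
      rcases mLt_trichotomy (Fin.tail x) (Fin.tail y) with h | h | h
      · exact Or.inl (Or.inl h)
      · rcases lt_trichotomy (x 0) (y 0) with h0 | h0 | h0
        · exact Or.inl (Or.inr ⟨h, h0⟩)
        · refine Or.inr (Or.inl ?_)
          rw [← Fin.cons_self_tail x, ← Fin.cons_self_tail y, h, h0]
        · exact Or.inr (Or.inr (Or.inr ⟨h.symm, h0⟩))
      · exact Or.inr (Or.inr (Or.inl h))

lemma mLe_refl {n} (x : Fin n → ℕ) : mLe x x := Or.inr rfl

lemma mLe_antisymm {n} {x y : Fin n → ℕ} (h1 : mLe x y) (h2 : mLe y x) : x = y := by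
  rcases h1 with h1 | h1
  · rcases h2 with h2 | h2
    · exact absurd (mLt_trans h1 h2) (mLt_irrefl x)
    · exact h2.symm
  · exact h1

lemma mLe_of_ne_D {n} {x y : Fin n → ℕ} (h : mLe x y) (hne : x ≠ y) : mLt x y := by
  rcases h with h | h
  · exact h
  · exact absurd h hne

lemma exists_max {n} (s : Finset (Fin n → ℕ)) (hs : s.Nonempty) :
    ∃ m ∈ s, ∀ x ∈ s, mLe x m := by
  classical
  revert hs
  induction s using Finset.induction_on with
  | empty => intro hs; simp at hs
  | @insert a s ha ih =>
    intro _
    rcases s.eq_empty_or_nonempty with rfl | hs'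
    · refine ⟨a, by simp, ?_⟩
      intro x hx
      simp only [Finset.mem_insert, Finset.notMem_empty, or_false] at hx
      subst hx; exact mLe_refl _
    · obtain ⟨m, hm, hmax⟩ := ih hs'
      rcases mLt_trichotomy a m with h | h | h
      · refine ⟨m, Finset.mem_insert_of_mem hm, ?_⟩
        intro x hx
        rcases Finset.mem_insert.1 hx with rfl | hx
        · exact Or.inl h
        · exact hmax x hx
      · subst h
        refine ⟨a, Finset.mem_insert_self _ _, ?_⟩
        intro x hx
        rcases Finset.mem_insert.1 hx with rfl | hx
        · exact mLe_refl _
        · exact hmax x hx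
      · refine ⟨a, Finset.mem_insert_self _ _, ?_⟩
        intro x hx
        rcases Finset.mem_insert.1 hx with rfl | hx
        · exact mLe_refl _
        · rcases hmax x hx with h' | h'
          · exact Or.inl (mLt_trans h' h)
          · subst h'; exact Or.inl h

variable {k : Type*} [Field k] [DecidableEq k]

/-- Interpolation: any function on a finite set `s ⊆ k` agrees on `s` with a
polynomial of degree `< #s`. -/
lemma interp (s : Finset k) (g : k → k) :
    ∃ b : ℕ → k, ∀ x ∈ s, (∑ i ∈ Finset.range s.card, b i * x ^ i) = g x := by
  rcases s.eq_empty_or_nonempty with rfl | hs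
  · exact ⟨0, by simp⟩
  set P := Lagrange.interpolate s id g with hP
  have hdeg : P.natDegree < s.card := by
    rcases eq_or_ne P 0 with h | h
    · rw [h]; simpa using Finset.card_pos.2 hs
    · rw [Polynomial.natDegree_lt_iff_degree_lt h]
      exact Lagrange.degree_interpolate_lt _ (Set.injOn_id _)
  refine ⟨fun i => P.coeff i, fun x hx => ?_⟩
  have h1 := Polynomial.eval_eq_sum_range' hdeg x
  have h2 : Polynomial.eval (id x) P = g x :=
    Lagrange.eval_interpolate_at_node _ (Set.injOn_id _) hx
  simp only [id] at h2
  rw [← h2, h1]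

/-- A "polynomial" of degree `< #s` vanishing on all of `s` has zero coefficients. -/
lemma vanish (s : Finset k) (b : ℕ → k)
    (h : ∀ x ∈ s, (∑ i ∈ Finset.range s.card, b i * x ^ i) = 0) :
    ∀ i ∈ Finset.range s.card, b i = 0 := by
  classical
  set P : Polynomial k := ∑ i ∈ Finset.range s.card, Polynomial.C (b i) * Polynomial.X ^ i with hP
  have hcoeff : ∀ j ∈ Finset.range s.card, P.coeff j = b j := by
    intro j hj
    rw [hP, Polynomial.finset_sum_coeff]
    rw [Finset.sum_eq_single j]
    · simp
    · intro i _ hij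
      simp [Polynomial.coeff_C_mul, Polynomial.coeff_X_pow, (Ne.symm hij)]
    · intro hcon; exact absurd hj hcon
  have heval : ∀ x ∈ s, P.eval x = 0 := by
    intro x hx
    rw [hP]
    simpa [Polynomial.eval_finset_sum] using h x hx
  intro i hi
  have h0 : 0 < s.card := lt_of_le_of_lt (Nat.zero_le i) (Finset.mem_range.1 hi)
  have hdeg : P.natDegree < s.card := by
    refine lt_of_le_of_lt
      (Polynomial.natDegree_sum_le_of_forall_le _ _ (n := s.card - 1) ?_) ?_
    · intro j hj
      refine (Polynomial.natDegree_C_mul_le _ _).trans ?_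
      have : j ≤ s.card - 1 := Nat.le_sub_one_of_lt (Finset.mem_range.1 hj)
      simpa using (Polynomial.natDegree_X_pow (R := k) j).le.trans this
    · omega
  have hP0 : P = 0 :=
    Polynomial.eq_zero_of_natDegree_lt_card_of_eval_eq_zero' P s heval hdeg
  rw [← hcoeff i hi, hP0, Polynomial.coeff_zero]


section Combinatorics

variable {k : Type*} [Field k] [DecidableEq k]

def Fib {n : ℕ} (A : Finset (Fin (n+1) → k)) (a1 : k) : Finset (Fin n → k) :=
  (A.filter (fun a => a 0 = a1)).image (fun a => Fin.tail a)

def SA {n : ℕ} (A : Finset (Fin (n+1) → k)) : Finset k := A.image (fun a => a 0)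

def UA {n : ℕ} (A : Finset (Fin (n+1) → k)) : Finset (Fin n → ℕ) :=
  (SA A).biUnion (fun a1 => DofA n (Fib A a1))

def Sd {n : ℕ} (A : Finset (Fin (n+1) → k)) (dh : Fin n → ℕ) : Finset k :=
  (SA A).filter (fun a1 => dh ∈ DofA n (Fib A a1))

lemma DofA_succ_eq {n : ℕ} (A : Finset (Fin (n+1) → k)) :
    DofA (n+1) A
      = (UA A).biUnion
          (fun dh => (Finset.range (Sd A dh).card).image (fun j => Fin.cons j dh)) := rfl

lemma mem_SA {n : ℕ} {A : Finset (Fin (n+1) → k)} {a : Fin (n+1) → k} (ha : a ∈ A) :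
    a 0 ∈ SA A := Finset.mem_image_of_mem _ ha

lemma mem_Fib {n : ℕ} {A : Finset (Fin (n+1) → k)} {a1 : k} {b : Fin n → k} :
    b ∈ Fib A a1 ↔ ∃ a, a ∈ A ∧ a 0 = a1 ∧ Fin.tail a = b := by
  simp [Fib, Finset.mem_image, Finset.mem_filter, and_assoc]

lemma tail_mem_Fib {n : ℕ} {A : Finset (Fin (n+1) → k)} {a : Fin (n+1) → k} (ha : a ∈ A) :
    Fin.tail a ∈ Fib A (a 0) := mem_Fib.2 ⟨a, ha, rfl, rfl⟩

lemma D_Fib_subset_UA {n : ℕ} {A : Finset (Fin (n+1) → k)} {a1 : k} (h : a1 ∈ SA A) :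
    DofA n (Fib A a1) ⊆ UA A := fun dh hdh => Finset.mem_biUnion.2 ⟨a1, h, hdh⟩

lemma mem_Sd {n : ℕ} {A : Finset (Fin (n+1) → k)} {dh : Fin n → ℕ} {a1 : k} :
    a1 ∈ Sd A dh ↔ a1 ∈ SA A ∧ dh ∈ DofA n (Fib A a1) := Finset.mem_filter

lemma mem_UA_of_Sd_nonempty {n : ℕ} {A : Finset (Fin (n+1) → k)} {dh : Fin n → ℕ}
    (h : (Sd A dh).Nonempty) : dh ∈ UA A := by
  obtain ⟨a1, ha1⟩ := h
  obtain ⟨h1, h2⟩ := mem_Sd.1 ha1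
  exact D_Fib_subset_UA h1 h2

lemma mem_DofA_succ {n : ℕ} {A : Finset (Fin (n+1) → k)} {d : Fin (n+1) → ℕ} :
    d ∈ DofA (n+1) A ↔ Fin.tail d ∈ UA A ∧ d 0 < (Sd A (Fin.tail d)).card := by
  rw [DofA_succ_eq]
  simp only [Finset.mem_biUnion, Finset.mem_image, Finset.mem_range]
  constructor
  · rintro ⟨dh, hdh, j, hj, rfl⟩
    simpa [Fin.tail_cons, Fin.cons_zero] using ⟨hdh, hj⟩
  · rintro ⟨h1, h2⟩
    exact ⟨Fin.tail d, h1, d 0, h2, Fin.cons_self_tail d⟩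

lemma sum_DofA_succ {M : Type*} [AddCommMonoid M] {n : ℕ} (A : Finset (Fin (n+1) → k))
    (f : (Fin (n+1) → ℕ) → M) :
    ∑ γ ∈ DofA (n+1) A, f γ
      = ∑ dh ∈ UA A, ∑ i ∈ Finset.range (Sd A dh).card, f (Fin.cons i dh) := by
  rw [DofA_succ_eq, Finset.sum_biUnion]
  · refine Finset.sum_congr rfl fun dh _ => ?_
    rw [Finset.sum_image]
    intro i _ j _ hij
    simpa using congrFun hij 0
  · intro d1 _ d2 _ hne
    rw [Function.onFun, Finset.disjoint_left]
    rintro x hx1 hx2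
    simp only [Finset.mem_image, Finset.mem_range] at hx1 hx2
    obtain ⟨i, _, rfl⟩ := hx1
    obtain ⟨j, _, hj⟩ := hx2
    apply hne
    simpa [Fin.tail_cons] using (congrArg Fin.tail hj).symm

def mon {n : ℕ} (a : Fin n → k) (γ : Fin n → ℕ) : k := ∏ i, a i ^ γ i

lemma mon_zero (a : Fin 0 → k) (γ : Fin 0 → ℕ) : mon a γ = 1 := by simp [mon]

lemma mon_succ {n : ℕ} (a : Fin (n+1) → k) (γ : Fin (n+1) → ℕ) :
    mon a γ = a 0 ^ γ 0 * mon (Fin.tail a) (Fin.tail γ) := by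
  rw [mon, Fin.prod_univ_succ]; rfl

lemma mon_cons {n : ℕ} (a : Fin (n+1) → k) (i : ℕ) (dh : Fin n → ℕ) :
    mon a (Fin.cons i dh) = a 0 ^ i * mon (Fin.tail a) dh := by
  rw [mon_succ]; simp

end Combinatorics

section Main

variable (k : Type*) [Field k] [DecidableEq k]

def IndepStmt (n : ℕ) : Prop :=
  ∀ (A : Finset (Fin n → k)) (c : (Fin n → ℕ) → k),
    (∀ a ∈ A, ∑ γ ∈ DofA n A, c γ * mon a γ = 0) → ∀ γ ∈ DofA n A, c γ = 0

def ClaimStmt (n : ℕ) : Prop :=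
  ∀ (A : Finset (Fin n → k)) (e : Fin n → ℕ),
    ∃ c : (Fin n → ℕ) → k, (∀ γ, c γ ≠ 0 → γ ∈ DofA n A ∧ mLe γ e) ∧
      ∀ a ∈ A, ∑ γ ∈ DofA n A, c γ * mon a γ = mon a e

variable {k}

lemma DofA_zero_eq {A : Finset (Fin 0 → k)} (hA : A.Nonempty) :
    DofA 0 A = {fun _ => 0} := by
  show A.image (fun _ => (fun _ => 0)) = {fun _ => 0}
  rw [Finset.image_const hA]

lemma indep_zero : IndepStmt k 0 := by
  intro A c hc γ hγ
  have hmem : γ ∈ A.image (fun _ => (fun _ => (0:ℕ))) := hγ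
  simp only [Finset.mem_image] at hmem
  obtain ⟨a, ha, rfl⟩ := hmem
  have := hc a ha
  rw [DofA_zero_eq ⟨a, ha⟩, Finset.sum_singleton, mon_zero, mul_one] at this
  exact this

lemma claim_zero : ClaimStmt k 0 := by
  intro A e
  classical
  refine ⟨fun γ => if γ ∈ DofA 0 A then 1 else 0, ?_, ?_⟩
  · intro γ hγ
    have hmem : γ ∈ DofA 0 A := by
      by_contra h; simp [h] at hγ
    exact ⟨hmem, Or.inr (funext fun i => i.elim0)⟩
  · intro a ha
    rw [DofA_zero_eq ⟨a, ha⟩, Finset.sum_singleton, mon_zero, mon_zero, mul_one]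
    simp [DofA_zero_eq ⟨a, ha⟩]

lemma claim' {n : ℕ} (IH : ClaimStmt k n) (A : Finset (Fin (n+1) → k)) (e : Fin n → ℕ) :
    ∀ h : k → k, ∃ c : (Fin (n+1) → ℕ) → k,
      (∀ γ, c γ ≠ 0 → γ ∈ DofA (n+1) A ∧
        (mLt (Fin.tail γ) e ∨ (Fin.tail γ = e ∧ γ 0 < (Sd A e).card))) ∧
      ∀ a ∈ A, ∑ γ ∈ DofA (n+1) A, c γ * mon a γ = h (a 0) * mon (Fin.tail a) e := by
  classical
  refine (mLt_wf n).induction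
    (C := fun e => ∀ h : k → k, ∃ c : (Fin (n+1) → ℕ) → k,
      (∀ γ, c γ ≠ 0 → γ ∈ DofA (n+1) A ∧
        (mLt (Fin.tail γ) e ∨ (Fin.tail γ = e ∧ γ 0 < (Sd A e).card))) ∧
      ∀ a ∈ A, ∑ γ ∈ DofA (n+1) A, c γ * mon a γ = h (a 0) * mon (Fin.tail a) e) e ?_
  clear e
  intro e IHe h
  obtain ⟨b, hb⟩ := interp (Sd A e) h
  set m := (Sd A e).card with hm
  set R : k → k := fun x => h x - ∑ i ∈ Finset.range m, b i * x ^ i with hR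
  have Hcc : ∀ a1 : k, ∃ cc : (Fin n → ℕ) → k,
      (∀ dh, cc dh ≠ 0 → dh ∈ DofA n (Fib A a1) ∧ mLe dh e) ∧
      ∀ bb ∈ Fib A a1, ∑ dh ∈ DofA n (Fib A a1), cc dh * mon bb dh = mon bb e :=
    fun a1 => IH (Fib A a1) e
  choose cc hccsupp hccsum using Hcc
  set V : Finset (Fin n → ℕ) := (UA A).filter (fun dh => mLt dh e) with hV
  have Hcd : ∀ dh : Fin n → ℕ, ∃ cd : (Fin (n+1) → ℕ) → k,
      mLt dh e →
      ((∀ γ, cd γ ≠ 0 → γ ∈ DofA (n+1) A ∧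
         (mLt (Fin.tail γ) dh ∨ (Fin.tail γ = dh ∧ γ 0 < (Sd A dh).card))) ∧
       ∀ a ∈ A, ∑ γ ∈ DofA (n+1) A, cd γ * mon a γ
         = (R (a 0) * cc (a 0) dh) * mon (Fin.tail a) dh) := by
    intro dh
    by_cases hdh : mLt dh e
    · obtain ⟨cd, h1, h2⟩ := IHe dh hdh (fun x => R x * cc x dh)
      exact ⟨cd, fun _ => ⟨h1, h2⟩⟩
    · exact ⟨0, fun hcon => absurd hcon hdh⟩
  choose cd hcd using Hcd
  set cQ : (Fin (n+1) → ℕ) → k :=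
    fun γ => if γ ∈ DofA (n+1) A ∧ Fin.tail γ = e then b (γ 0) else 0 with hcQ
  refine ⟨fun γ => cQ γ + ∑ dh ∈ V, cd dh γ, ?_, ?_⟩
  · intro γ hγ
    by_cases h1 : cQ γ = 0
    · have h2 : ∑ dh ∈ V, cd dh γ ≠ 0 := by
        intro hcon
        have hgoal : cQ γ + ∑ dh ∈ V, cd dh γ = 0 := by rw [h1, hcon, add_zero]
        exact hγ hgoal
      obtain ⟨dh, hdhV, hne⟩ := Finset.exists_ne_zero_of_sum_ne_zero h2
      have hdhlt : mLt dh e := (Finset.mem_filter.1 hdhV).2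
      obtain ⟨hs, _⟩ := hcd dh hdhlt
      obtain ⟨hmem, hlt⟩ := hs γ hne
      refine ⟨hmem, Or.inl ?_⟩
      rcases hlt with h' | ⟨h', _⟩
      · exact mLt_trans h' hdhlt
      · rw [h']; exact hdhlt
    · have h2 : γ ∈ DofA (n+1) A ∧ Fin.tail γ = e := by
        by_contra h2
        exact h1 (if_neg h2)
      refine ⟨h2.1, Or.inr ⟨h2.2, ?_⟩⟩
      have := (mem_DofA_succ.1 h2.1).2
      rwa [h2.2] at this
  · intro a ha
    have hsplit : ∀ γ ∈ DofA (n+1) A, (cQ γ + ∑ dh ∈ V, cd dh γ) * mon a γ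
        = cQ γ * mon a γ + ∑ dh ∈ V, cd dh γ * mon a γ := by
      intro γ _; rw [add_mul, Finset.sum_mul]
    rw [Finset.sum_congr rfl hsplit, Finset.sum_add_distrib]
    have hQ : ∑ γ ∈ DofA (n+1) A, cQ γ * mon a γ
        = (∑ i ∈ Finset.range m, b i * (a 0) ^ i) * mon (Fin.tail a) e := by
      rw [sum_DofA_succ A (fun γ => cQ γ * mon a γ)]
      have hinner : ∀ dh ∈ UA A,
          (∑ i ∈ Finset.range (Sd A dh).card, cQ (Fin.cons i dh) * mon a (Fin.cons i dh))
          = if dh = e then (∑ i ∈ Finset.range m, b i * (a 0) ^ i) * mon (Fin.tail a) e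
            else 0 := by
        intro dh hdh
        by_cases hde : dh = e
        · subst hde
          rw [if_pos rfl, Finset.sum_mul]
          refine Finset.sum_congr (by rw [hm]) (fun i hi => ?_)
          have hmemD : Fin.cons i dh ∈ DofA (n+1) A := by
            rw [mem_DofA_succ]
            simp only [Fin.tail_cons, Fin.cons_zero]
            exact ⟨hdh, by rw [← hm]; exact Finset.mem_range.1 hi⟩
          rw [hcQ]
          simp only [hmemD, Fin.tail_cons, and_self, if_pos, true_and, if_pos rfl]
          rw [mon_cons, Fin.cons_zero]
          ring
        · rw [if_neg hde]
          refine Finset.sum_eq_zero (fun i _ => ?_)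
          rw [hcQ]
          simp only [Fin.tail_cons, hde, and_false, if_false, zero_mul]
      rw [Finset.sum_congr rfl hinner, Finset.sum_ite_eq' (UA A) e]
      by_cases he : e ∈ UA A
      · rw [if_pos he]
      · rw [if_neg he]
        have hm0 : m = 0 := by
          rw [hm, Finset.card_eq_zero]
          by_contra hne
          exact he (mem_UA_of_Sd_nonempty (Finset.nonempty_of_ne_empty hne))
        rw [hm0]
        simp
    have hRpart : ∑ γ ∈ DofA (n+1) A, ∑ dh ∈ V, cd dh γ * mon a γ
        = R (a 0) * mon (Fin.tail a) e := by
      rw [Finset.sum_comm]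
      have hterm : ∀ dh ∈ V, (∑ γ ∈ DofA (n+1) A, cd dh γ * mon a γ)
          = R (a 0) * (cc (a 0) dh * mon (Fin.tail a) dh) := by
        intro dh hdh
        have hlt : mLt dh e := (Finset.mem_filter.1 hdh).2
        rw [(hcd dh hlt).2 a ha]; ring
      rw [Finset.sum_congr rfl hterm, ← Finset.mul_sum]
      by_cases hz : R (a 0) = 0
      · rw [hz, zero_mul, zero_mul]
      · have ha0S : a 0 ∈ SA A := mem_SA ha
        have hnot : e ∉ DofA n (Fib A (a 0)) := by
          intro hcon
          apply hz
          rw [hR]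
          have : a 0 ∈ Sd A e := mem_Sd.2 ⟨ha0S, hcon⟩
          simp only [hb (a 0) this]
          ring
        have hVD : ∑ dh ∈ V, cc (a 0) dh * mon (Fin.tail a) dh
            = ∑ dh ∈ DofA n (Fib A (a 0)), cc (a 0) dh * mon (Fin.tail a) dh := by
          rw [← Finset.sum_inter_add_sum_sdiff V (DofA n (Fib A (a 0)))
              (fun dh => cc (a 0) dh * mon (Fin.tail a) dh),
              ← Finset.sum_inter_add_sum_sdiff (DofA n (Fib A (a 0))) V
              (fun dh => cc (a 0) dh * mon (Fin.tail a) dh)]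
          have e1 : ∑ dh ∈ V \ DofA n (Fib A (a 0)), cc (a 0) dh * mon (Fin.tail a) dh = 0 := by
            refine Finset.sum_eq_zero (fun dh hdh => ?_)
            have := (Finset.mem_sdiff.1 hdh).2
            by_cases hc0 : cc (a 0) dh = 0
            · rw [hc0, zero_mul]
            · exact absurd (hccsupp (a 0) dh hc0).1 this
          have e2 : ∑ dh ∈ DofA n (Fib A (a 0)) \ V, cc (a 0) dh * mon (Fin.tail a) dh = 0 := by
            refine Finset.sum_eq_zero (fun dh hdh => ?_)
            obtain ⟨hdhD, hdhV⟩ := Finset.mem_sdiff.1 hdh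
            by_cases hc0 : cc (a 0) dh = 0
            · rw [hc0, zero_mul]
            · exfalso
              apply hdhV
              obtain ⟨_, hle⟩ := hccsupp (a 0) dh hc0
              have hne : dh ≠ e := fun hcon => hnot (hcon ▸ hdhD)
              exact Finset.mem_filter.2 ⟨D_Fib_subset_UA ha0S hdhD, mLe_of_ne_D hle hne⟩
          rw [e1, e2, add_zero, add_zero, Finset.inter_comm]
        rw [hVD, hccsum (a 0) (Fin.tail a) (by simpa using tail_mem_Fib ha)]
    rw [hQ, hRpart, hR]
    ring

lemma claim_succ {n : ℕ} (IH : ClaimStmt k n) : ClaimStmt k (n+1) := by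
  intro A e'
  classical
  by_cases hin : e' ∈ DofA (n+1) A
  · refine ⟨fun γ => if γ = e' then 1 else 0, ?_, ?_⟩
    · intro γ hγ
      have : γ = e' := by
        by_contra hne; simp [hne] at hγ
      subst this
      exact ⟨hin, mLe_refl _⟩
    · intro a ha
      simp [ite_mul, Finset.sum_ite_eq', hin]
  · obtain ⟨c, hsupp, hsum⟩ := claim' IH A (Fin.tail e') (fun x => x ^ (e' 0))
    refine ⟨c, ?_, ?_⟩
    · intro γ hγ
      obtain ⟨hmem, hlt⟩ := hsupp γ hγ
      refine ⟨hmem, ?_⟩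
      rcases hlt with h' | ⟨h', hcard⟩
      · exact Or.inl (Or.inl h')
      · have hle : (Sd A (Fin.tail e')).card ≤ e' 0 := by
          by_contra hlt2
          push_neg at hlt2
          refine hin (mem_DofA_succ.2 ⟨?_, hlt2⟩)
          refine mem_UA_of_Sd_nonempty (Finset.card_pos.1 ?_)
          omega
        exact Or.inl (Or.inr ⟨h', lt_of_lt_of_le hcard hle⟩)
    · intro a ha
      rw [hsum a ha, mon_succ]

lemma indep_succ {n : ℕ} (IHc : ClaimStmt k n) (IHi : IndepStmt k n) : IndepStmt k (n+1) := by
  intro A c hc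
  classical
  set W : Finset (Fin n → ℕ) :=
    (UA A).filter (fun dh => ∃ i ∈ Finset.range (Sd A dh).card, c (Fin.cons i dh) ≠ 0) with hW
  have hWempty : W = ∅ := by
    by_contra hne
    obtain ⟨ds, hdsW, hmax⟩ := exists_max W (Finset.nonempty_of_ne_empty hne)
    obtain ⟨hdsU, hex⟩ := Finset.mem_filter.1 hdsW
    have hPzero : ∀ a1 ∈ Sd A ds,
        (∑ i ∈ Finset.range (Sd A ds).card, c (Fin.cons i ds) * a1 ^ i) = 0 := by
      intro a1 ha1
      obtain ⟨ha1S, hdsD⟩ := mem_Sd.1 ha1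
      have Hcc : ∀ dh : Fin n → ℕ, ∃ ccd : (Fin n → ℕ) → k,
          (∀ dh', ccd dh' ≠ 0 → dh' ∈ DofA n (Fib A a1) ∧ mLe dh' dh) ∧
          (∀ bb ∈ Fib A a1, ∑ dh' ∈ DofA n (Fib A a1), ccd dh' * mon bb dh' = mon bb dh) ∧
          (dh ∈ DofA n (Fib A a1) → ∀ dh', ccd dh' = if dh' = dh then 1 else 0) := by
        intro dh
        by_cases hdh : dh ∈ DofA n (Fib A a1)
        · refine ⟨fun dh' => if dh' = dh then 1 else 0, ?_, ?_, fun _ dh' => rfl⟩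
          · intro dh' h
            have hdd : dh' = dh := by
              by_contra hne'; simp [hne'] at h
            subst hdd
            exact ⟨hdh, mLe_refl _⟩
          · intro bb _
            simp [ite_mul, Finset.sum_ite_eq', hdh]
        · obtain ⟨ccd, h1, h2⟩ := IHc (Fib A a1) dh
          exact ⟨ccd, h1, h2, fun hcon => absurd hcon hdh⟩
      choose ccd hccd1 hccd2 hccd3 using Hcc
      set P : (Fin n → ℕ) → k := fun dh =>
        ∑ i ∈ Finset.range (Sd A dh).card, c (Fin.cons i dh) * a1 ^ i with hP
      set c' : (Fin n → ℕ) → k := fun dh' => ∑ dh ∈ UA A, P dh * ccd dh dh' with hc'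
      have hrel : ∀ bb ∈ Fib A a1, ∑ dh' ∈ DofA n (Fib A a1), c' dh' * mon bb dh' = 0 := by
        intro bb hbb
        obtain ⟨a, haA, ha0, htail⟩ := mem_Fib.1 hbb
        have hfib : ∑ dh' ∈ DofA n (Fib A a1), c' dh' * mon bb dh'
            = ∑ dh ∈ UA A, P dh * mon bb dh := by
          have : ∀ dh' ∈ DofA n (Fib A a1), c' dh' * mon bb dh'
              = ∑ dh ∈ UA A, P dh * (ccd dh dh' * mon bb dh') := by
            intro dh' _
            rw [hc', Finset.sum_mul]
            exact Finset.sum_congr rfl (fun dh _ => by ring)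
          rw [Finset.sum_congr rfl this, Finset.sum_comm]
          refine Finset.sum_congr rfl (fun dh _ => ?_)
          rw [← Finset.mul_sum, hccd2 dh bb hbb]
        rw [hfib]
        have hAa : ∑ dh ∈ UA A, P dh * mon bb dh
            = ∑ γ ∈ DofA (n+1) A, c γ * mon a γ := by
          rw [sum_DofA_succ A (fun γ => c γ * mon a γ)]
          refine Finset.sum_congr rfl (fun dh _ => ?_)
          rw [hP, Finset.sum_mul]
          refine Finset.sum_congr rfl (fun i _ => ?_)
          rw [mon_cons, ha0, htail]
          ring
        rw [hAa, hc a haA]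
      have hzero := IHi (Fib A a1) c' hrel ds hdsD
      have hcds : c' ds = P ds := by
        show ∑ dh ∈ UA A, P dh * ccd dh ds = P ds
        rw [Finset.sum_eq_single ds]
        · rw [hccd3 ds hdsD ds, if_pos rfl, mul_one]
        · intro dh hdhU hne'
          by_cases hP0 : P dh = 0
          · rw [hP0, zero_mul]
          · have hdhW : dh ∈ W := by
              refine Finset.mem_filter.2 ⟨hdhU, ?_⟩
              by_contra hall
              push_neg at hall
              apply hP0
              rw [hP]
              exact Finset.sum_eq_zero (fun i hi => by rw [hall i hi, zero_mul])
            have hle : mLe dh ds := hmax dh hdhW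
            by_cases hdhD : dh ∈ DofA n (Fib A a1)
            · rw [hccd3 dh hdhD ds, if_neg (Ne.symm hne'), mul_zero]
            · by_cases hcc0 : ccd dh ds = 0
              · rw [hcc0, mul_zero]
              · obtain ⟨_, hle'⟩ := hccd1 dh ds hcc0
                exact absurd (mLe_antisymm hle hle' ▸ hdsD) hdhD
        · intro hcon
          exact absurd hdsU hcon
      show P ds = 0
      rw [← hcds]
      exact hzero
    have hvan := vanish (Sd A ds) (fun i => c (Fin.cons i ds)) hPzero
    obtain ⟨i, hi, hne0⟩ := hex
    exact hne0 (hvan i hi)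
  intro γ hγ
  by_contra hγ0
  obtain ⟨h1, h2⟩ := mem_DofA_succ.1 hγ
  have : Fin.tail γ ∈ W := Finset.mem_filter.2
    ⟨h1, ⟨γ 0, Finset.mem_range.2 h2, by rwa [Fin.cons_self_tail]⟩⟩
  rw [hWempty] at this
  exact absurd this (Finset.notMem_empty _)

lemma key : ∀ n : ℕ, IndepStmt k n ∧ ClaimStmt k n
  | 0 => ⟨indep_zero, claim_zero⟩
  | n+1 => ⟨indep_succ (key n).2 (key n).1, claim_succ (key n).2⟩

end Main

section Assembly

open MvPolynomial

variable {k : Type*} [Field k] [DecidableEq k] (n : ℕ) (A : Finset (Fin n → k))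

lemma aeval_eq_eval (a : Fin n → k) (f : MvPolynomial (Fin n) k) :
    MvPolynomial.aeval a f = MvPolynomial.eval a f := by
  rw [MvPolynomial.aeval_def, MvPolynomial.eval, Algebra.algebraMap_self]
  rfl

noncomputable def evQ :
    (MvPolynomial (Fin n) k ⧸ vanIdeal n A) →ₗ[k] ({ x // x ∈ A } → k) :=
  (Ideal.Quotient.liftₐ (vanIdeal n A)
    (Pi.algHom k (fun _ : { x // x ∈ A } => k)
      (fun a => MvPolynomial.aeval (a.1 : Fin n → k)))
    (fun f hf => funext fun a => by
      have h0 : MvPolynomial.eval (a.1 : Fin n → k) f = 0 := hf a.1 a.2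
      show MvPolynomial.aeval (a.1 : Fin n → k) f = 0
      rw [aeval_eq_eval, h0])).toLinearMap

lemma evQ_mk (f : MvPolynomial (Fin n) k) :
    evQ n A (Ideal.Quotient.mk (vanIdeal n A) f)
      = fun a : { x // x ∈ A } => MvPolynomial.eval (a.1 : Fin n → k) f := by
  funext a
  show MvPolynomial.aeval (a.1 : Fin n → k) f = MvPolynomial.eval (a.1 : Fin n → k) f
  exact aeval_eq_eval n a.1 f

lemma evQ_inj : Function.Injective (evQ n A) := by
  rw [← LinearMap.ker_eq_bot, Submodule.eq_bot_iff]
  intro x hx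
  obtain ⟨f, rfl⟩ := Ideal.Quotient.mk_surjective x
  rw [LinearMap.mem_ker, evQ_mk] at hx
  rw [Ideal.Quotient.eq_zero_iff_mem]
  intro a ha
  simpa using congrFun hx ⟨a, ha⟩

lemma evQ_monomial (d : Fin n →₀ ℕ) :
    evQ n A (Ideal.Quotient.mk (vanIdeal n A) (MvPolynomial.monomial d 1))
      = fun a : { x // x ∈ A } => mon (a.1 : Fin n → k) ⇑d := by
  rw [evQ_mk]
  funext a
  rw [MvPolynomial.eval_monomial, one_mul, Finsupp.prod_pow]
  rfl

noncomputable def vfam :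
    {γ : Fin n → ℕ // γ ∈ DofA n A} → MvPolynomial (Fin n) k ⧸ vanIdeal n A :=
  fun γ => Ideal.Quotient.mk (vanIdeal n A)
    (MvPolynomial.monomial (Finsupp.equivFunOnFinite.symm γ.1) 1)

lemma evQ_vfam (γ : {γ : Fin n → ℕ // γ ∈ DofA n A}) :
    evQ n A (vfam n A γ) = fun a : { x // x ∈ A } => mon (a.1 : Fin n → k) γ.1 := by
  rw [vfam, evQ_monomial]
  funext a
  simp [mon, Finsupp.coe_equivFunOnFinite_symm]

lemma vfam_li : LinearIndependent k (vfam n A) := by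
  classical
  apply LinearIndependent.of_comp (evQ n A)
  rw [Fintype.linearIndependent_iff]
  intro g hg γ0
  set c : (Fin n → ℕ) → k := fun γ => if h : γ ∈ DofA n A then g ⟨γ, h⟩ else 0 with hc
  have hsum : ∀ a ∈ A, ∑ γ ∈ DofA n A, c γ * mon a γ = 0 := by
    intro a ha
    have h1 := congrFun hg ⟨a, ha⟩
    simp only [Finset.sum_apply, Pi.smul_apply, Function.comp_apply, evQ_vfam,
      smul_eq_mul, Pi.zero_apply] at h1
    rw [← h1, Finset.univ_eq_attach, ← Finset.sum_attach (DofA n A)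
      (fun γ => c γ * mon a γ)]
    refine Finset.sum_congr rfl fun γ _ => ?_
    rw [hc]
    simp [γ.2]
  have hindep := (key (k := k) n).1 A c hsum γ0.1 γ0.2
  rw [hc] at hindep
  simpa [γ0.2] using hindep

lemma vfam_span : ⊤ ≤ Submodule.span k (Set.range (vfam n A)) := by
  classical
  intro x _
  obtain ⟨f, rfl⟩ := Ideal.Quotient.mk_surjective x
  have hf : Ideal.Quotient.mk (vanIdeal n A) f
      = ∑ d ∈ f.support, (MvPolynomial.coeff d f) •
          Ideal.Quotient.mk (vanIdeal n A) (MvPolynomial.monomial d 1) := by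
    rw [← Ideal.Quotient.mkₐ_eq_mk k]
    conv_lhs => rw [f.as_sum]
    rw [map_sum]
    refine Finset.sum_congr rfl fun d _ => ?_
    rw [← map_smul]
    congr 1
    rw [MvPolynomial.smul_monomial, smul_eq_mul, mul_one]
  rw [hf]
  refine Submodule.sum_mem _ fun d _ => Submodule.smul_mem _ _ ?_
  obtain ⟨c, hsupp, hsum⟩ := (key (k := k) n).2 A ⇑d
  have heq : Ideal.Quotient.mk (vanIdeal n A) (MvPolynomial.monomial d 1)
      = ∑ γ ∈ (DofA n A).attach, c γ.1 • vfam n A γ := by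
    apply evQ_inj
    rw [map_sum, evQ_monomial]
    funext a
    simp only [Finset.sum_apply, map_smul, Pi.smul_apply, evQ_vfam, smul_eq_mul]
    rw [Finset.sum_attach (DofA n A) (fun γ => c γ * mon (a.1 : Fin n → k) γ)]
    exact (hsum a.1 a.2).symm
  rw [heq]
  exact Submodule.sum_mem _ fun γ _ =>
    Submodule.smul_mem _ _ (Submodule.subset_span ⟨γ, rfl⟩)

end Assembly

end Stmt16Aux

/-- The residue classes of the monomials `X^γ`, `γ ∈ D(A)`, form a basis of the
`k`-vector space `k[X₁,…,Xₙ]/I(A)`. -/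
theorem stmt_16 (n : ℕ) (A : Finset (Fin n → k)) :
    ∃ b : Module.Basis {γ : Fin n → ℕ // γ ∈ DofA n A} k
        (MvPolynomial (Fin n) k ⧸ vanIdeal n A),
      ∀ γ : {γ : Fin n → ℕ // γ ∈ DofA n A},
        b γ = Ideal.Quotient.mk (vanIdeal n A)
          (MvPolynomial.monomial (Finsupp.equivFunOnFinite.symm γ.1) 1) := by
  refine ⟨Module.Basis.mk (Stmt16Aux.vfam_li n A) (Stmt16Aux.vfam_span n A), fun γ => ?_⟩
  rw [Module.Basis.mk_apply]
  rfl
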